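/- Let f be a linear space function on n points having a point of index 0, 1, or 2; relabel so that the point n has index at most 2, and let f' be the linear space function on {1,…,n−1} induced by f (so f'(S) = 1 if and only if S ⊆ T for some T with f(T) = 1). Then there exist polynomials μ_g(x) with integer coefficients, indexed by the linear space functions g on n−1 points with g ≥ f', such that for every finite projective plane Π of order q, B_f(Π) = Σ_{g ≥ f'} μ_g(q)·A_g(Π). In particular, B_f(Π) is expressible as a polynomial in q that is linear in the quantities A_g(Π). -/

import Mathlib

open scoped Classical

structure ProjPlane (q : ℕ) where
  Point : Type
  fintypePoint : Fintype Point
  L : Set (Set Point)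
  unique_line : ∀ p₁ p₂ : Point, p₁ ≠ p₂ → ∃! ℓ, ℓ ∈ L ∧ p₁ ∈ ℓ ∧ p₂ ∈ ℓ
  unique_point : ∀ ℓ₁ ℓ₂, ℓ₁ ∈ L → ℓ₂ ∈ L → ℓ₁ ≠ ℓ₂ → ∃! p, p ∈ ℓ₁ ∧ p ∈ ℓ₂
  nondegenerate : ∃ a b c d : Point, a ≠ b ∧ a ≠ c ∧ a ≠ d ∧ b ≠ c ∧ b ≠ d ∧ c ≠ d ∧
    ∀ ℓ ∈ L, ¬({a, b, c} ⊆ ℓ) ∧ ¬({a, b, d} ⊆ ℓ) ∧ ¬({a, c, d} ⊆ ℓ) ∧ ¬({b, c, d} ⊆ ℓ)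
  line_card : ∀ ℓ ∈ L, ℓ.ncard = q + 1
  point_card : ∀ p : Point, {ℓ ∈ L | p ∈ ℓ}.ncard = q + 1

/-- A set of points is collinear if it is contained in a line. -/
noncomputable def ProjPlane.Collinear {q : ℕ} (Pl : ProjPlane q) (s : Set Pl.Point) : Prop :=
  ∃ ℓ ∈ Pl.L, s ⊆ ℓ

/-- The number of ordered `n`-arcs of the plane. -/
noncomputable def ProjPlane.nArcs {q : ℕ} (Pl : ProjPlane q) (n : ℕ) : ℕ :=
  Nat.card {p : Fin n → Pl.Point // Function.Injective p ∧
    ∀ i j k : Fin n, i ≠ j → i ≠ k → j ≠ k → ¬ Pl.Collinear {p i, p j, p k}}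

/-- Number of ordered strong realizations of the Fano plane. -/
noncomputable def ProjPlane.A7 {q : ℕ} (Pl : ProjPlane q) : ℕ :=
  Nat.card {p : ZMod 7 → Pl.Point // Function.Injective p ∧
    ∃ σ : Equiv.Perm (ZMod 7), ∀ i j k : ZMod 7, i ≠ j → i ≠ k → j ≠ k →
      (Pl.Collinear {p (σ i), p (σ j), p (σ k)} ↔
        ∃ a : ZMod 7, ({i, j, k} : Set (ZMod 7)) = {a, a + 1, a + 3})}

/-- Number of ordered strong realizations of the Möbius–Kantor configuration. -/
noncomputable def ProjPlane.A8 {q : ℕ} (Pl : ProjPlane q) : ℕ :=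
  Nat.card {p : ZMod 8 → Pl.Point // Function.Injective p ∧
    ∃ σ : Equiv.Perm (ZMod 8), ∀ i j k : ZMod 8, i ≠ j → i ≠ k → j ≠ k →
      (Pl.Collinear {p (σ i), p (σ j), p (σ k)} ↔
        ∃ a : ZMod 8, ({i, j, k} : Set (ZMod 8)) = {a, a + 1, a + 3})}

/-- A boolean `m`-function (a function from subsets of the `m`-point set to
`{0,1}`) is a linear space function if collinear sets are downward closed,
all sets of at most 2 points are collinear, and two collinear sets meeting in
at least 2 points have collinear union. -/
def IsLSF {m : ℕ} (f : Finset (Fin m) → Bool) : Prop :=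
  (∀ I J : Finset (Fin m), J ⊆ I → f I = true → f J = true) ∧
  (∀ I : Finset (Fin m), I.card ≤ 2 → f I = true) ∧
  (∀ I J : Finset (Fin m), f I = true → f J = true → 2 ≤ (I ∩ J).card →
    f (I ∪ J) = true)

/-- A full line of `f`: a set of at least 3 points mapped to 1 by `f`, maximal
with respect to inclusion among sets mapped to 1. -/
def IsFullLine {m : ℕ} (f : Finset (Fin m) → Bool) (S : Finset (Fin m)) : Prop :=
  3 ≤ S.card ∧ f S = true ∧ ∀ T : Finset (Fin m), S ⊆ T → f T = true → T = S

/-- The index of a point: the number of full lines containing it. -/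
noncomputable def pointIndex {m : ℕ} (f : Finset (Fin m) → Bool) (p : Fin m) : ℕ :=
  Nat.card {S : Finset (Fin m) // IsFullLine f S ∧ p ∈ S}

/-- A superfiguration: a linear space function in which every point has index
at least 3 (every full line automatically has at least 3 points). -/
def IsSuperfiguration {m : ℕ} (f : Finset (Fin m) → Bool) : Prop :=
  IsLSF f ∧ ∀ p : Fin m, 3 ≤ pointIndex f p

/-- `A_f(Π)`: the number of strong realizations of the boolean `m`-function
`f` in the plane: tuples of distinct points such that `f⁻¹(1)` is exactly the
collection of subsets lying on a common line. -/
noncomputable def strongCount {q m : ℕ} (Pl : ProjPlane q)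
    (f : Finset (Fin m) → Bool) : ℕ :=
  Nat.card {p : Fin m → Pl.Point // Function.Injective p ∧
    ∀ S : Finset (Fin m), (f S = true ↔ ∃ ℓ ∈ Pl.L, ∀ i ∈ S, p i ∈ ℓ)}

/-- `B_f(Π) = Σ_{g ≥ f} A_g(Π)`, the sum over all boolean `m`-functions
`g ≥ f`; the number of weak realizations of `f` when `f` is a linear space
function. -/
noncomputable def weakCount {q m : ℕ} (Pl : ProjPlane q)
    (f : Finset (Fin m) → Bool) : ℕ :=
  ∑ g ∈ Finset.univ.filter
      (fun g : Finset (Fin m) → Bool => ∀ S, f S = true → g S = true),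
    strongCount Pl g

attribute [instance] ProjPlane.fintypePoint

namespace WCAux

open Finset

variable {q : ℕ} (Pl : ProjPlane q)



lemma nonempty_point : Nonempty Pl.Point := by
  obtain ⟨a, -⟩ := Pl.nondegenerate; exact ⟨a⟩

lemma exists_line_through (a : Pl.Point) : ∃ ℓ ∈ Pl.L, a ∈ ℓ := by
  have h := Pl.point_card a
  have : {ℓ ∈ Pl.L | a ∈ ℓ}.Nonempty := by
    apply Set.nonempty_of_ncard_ne_zero; rw [h]; omega
  obtain ⟨ℓ, hℓ, ha⟩ := this
  exact ⟨ℓ, hℓ, ha⟩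

lemma exists_line_pair (a b : Pl.Point) : ∃ ℓ ∈ Pl.L, a ∈ ℓ ∧ b ∈ ℓ := by
  rcases eq_or_ne a b with rfl | hab
  · obtain ⟨ℓ, h1, h2⟩ := exists_line_through Pl a; exact ⟨ℓ, h1, h2, h2⟩
  · obtain ⟨ℓ, ⟨h1, h2, h3⟩, -⟩ := Pl.unique_line a b hab
    exact ⟨ℓ, h1, h2, h3⟩

lemma line_eq_of_pair {a b : Pl.Point} (hab : a ≠ b) {ℓ₁ ℓ₂ : Set Pl.Point}
    (h₁ : ℓ₁ ∈ Pl.L) (h₂ : ℓ₂ ∈ Pl.L) (ha₁ : a ∈ ℓ₁) (hb₁ : b ∈ ℓ₁)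
    (ha₂ : a ∈ ℓ₂) (hb₂ : b ∈ ℓ₂) : ℓ₁ = ℓ₂ := by
  obtain ⟨ℓ, -, hu⟩ := Pl.unique_line a b hab
  rw [hu ℓ₁ ⟨h₁, ha₁, hb₁⟩, hu ℓ₂ ⟨h₂, ha₂, hb₂⟩]

lemma card_point : Fintype.card Pl.Point = q ^ 2 + q + 1 := by
  obtain ⟨a⟩ := nonempty_point Pl
  set T : Finset (Set Pl.Point) := {ℓ ∈ Pl.L | a ∈ ℓ}.toFinset with hT
  have hTmem : ∀ ℓ, ℓ ∈ T ↔ ℓ ∈ Pl.L ∧ a ∈ ℓ := by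
    intro ℓ; simp [hT, Set.mem_toFinset]
  have hTcard : T.card = q + 1 := by
    rw [← Pl.point_card a, Set.ncard_eq_toFinset_card']
  have hcover : (Finset.univ : Finset Pl.Point) =
      insert a (T.biUnion fun ℓ => ℓ.toFinset.erase a) := by
    ext x
    simp only [Finset.mem_univ, true_iff, Finset.mem_insert, Finset.mem_biUnion,
      Finset.mem_erase, Set.mem_toFinset]
    rcases eq_or_ne x a with rfl | hx
    · exact Or.inl rfl
    · refine Or.inr ?_
      obtain ⟨ℓ, h1, h2, h3⟩ := exists_line_pair Pl a x
      exact ⟨ℓ, (hTmem ℓ).2 ⟨h1, h2⟩, hx, h3⟩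
  have hdisj : ∀ ℓ₁ ∈ T, ∀ ℓ₂ ∈ T, ℓ₁ ≠ ℓ₂ →
      Disjoint (ℓ₁.toFinset.erase a) (ℓ₂.toFinset.erase a) := by
    intro ℓ₁ h₁ ℓ₂ h₂ hne
    rw [Finset.disjoint_left]
    rintro x hx₁ hx₂
    simp only [Finset.mem_erase, Set.mem_toFinset] at hx₁ hx₂
    obtain ⟨h₁', ha₁⟩ := (hTmem ℓ₁).1 h₁
    obtain ⟨h₂', ha₂⟩ := (hTmem ℓ₂).1 h₂
    obtain ⟨z, -, hz⟩ := Pl.unique_point ℓ₁ ℓ₂ h₁' h₂' hne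
    have e1 := hz x ⟨hx₁.2, hx₂.2⟩
    have e2 := hz a ⟨ha₁, ha₂⟩
    exact hx₁.1 (e1.trans e2.symm)
  have herase : ∀ ℓ ∈ T, (ℓ.toFinset.erase a).card = q := by
    intro ℓ hℓ
    obtain ⟨hℓ', ha⟩ := (hTmem ℓ).1 hℓ
    have : ℓ.toFinset.card = q + 1 := by
      rw [← Set.ncard_eq_toFinset_card', Pl.line_card ℓ hℓ']
    rw [Finset.card_erase_of_mem (Set.mem_toFinset.2 ha), this]; omega
  have hanotin : a ∉ T.biUnion fun ℓ => ℓ.toFinset.erase a := by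
    simp
  calc Fintype.card Pl.Point = (Finset.univ : Finset Pl.Point).card := rfl
    _ = (insert a (T.biUnion fun ℓ => ℓ.toFinset.erase a)).card := by rw [← hcover]
    _ = (T.biUnion fun ℓ => ℓ.toFinset.erase a).card + 1 :=
        Finset.card_insert_of_notMem hanotin
    _ = (∑ ℓ ∈ T, (ℓ.toFinset.erase a).card) + 1 := by rw [Finset.card_biUnion hdisj]
    _ = (∑ ℓ ∈ T, q) + 1 := by rw [Finset.sum_congr rfl herase]
    _ = (q + 1) * q + 1 := by rw [Finset.sum_const, hTcard, smul_eq_mul]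
    _ = q ^ 2 + q + 1 := by ring

/-- The collinearity condition for a tuple on an index set. -/
@[reducible] def LC {m : ℕ} (p : Fin m → Pl.Point) (S : Finset (Fin m)) : Prop :=
  ∃ ℓ ∈ Pl.L, ∀ i ∈ S, p i ∈ ℓ

lemma LC_mono {m : ℕ} {p : Fin m → Pl.Point} {S T : Finset (Fin m)} (hST : S ⊆ T)
    (h : LC Pl p T) : LC Pl p S := by
  obtain ⟨ℓ, h1, h2⟩ := h
  exact ⟨ℓ, h1, fun i hi => h2 i (hST hi)⟩

lemma LC_small {m : ℕ} (p : Fin m → Pl.Point) (S : Finset (Fin m)) (h : S.card ≤ 2) :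
    LC Pl p S := by
  rcases S.eq_empty_or_nonempty with rfl | ⟨i, hi⟩
  · obtain ⟨a⟩ := nonempty_point Pl
    obtain ⟨ℓ, h1, -⟩ := exists_line_through Pl a
    exact ⟨ℓ, h1, by simp⟩
  · by_cases hj : ∃ j ∈ S, j ≠ i
    · obtain ⟨j, hjS, hji⟩ := hj
      obtain ⟨ℓ, h1, h2, h3⟩ := exists_line_pair Pl (p i) (p j)
      refine ⟨ℓ, h1, fun k hk => ?_⟩
      have hsub' : ({i, j} : Finset (Fin m)) ⊆ S := by
        intro x hx; simp only [Finset.mem_insert, Finset.mem_singleton] at hx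
        rcases hx with rfl | rfl <;> assumption
      have hcard2 : ({i, j} : Finset (Fin m)).card = 2 := by
        rw [Finset.card_insert_of_notMem (by simp [hji.symm, Ne.symm]), Finset.card_singleton]
      have hseq : S = {i, j} := (Finset.eq_of_subset_of_card_le hsub' (by rw [hcard2]; omega)).symm
      rw [hseq] at hk
      simp only [Finset.mem_insert, Finset.mem_singleton] at hk
      rcases hk with rfl | rfl <;> assumption
    · push_neg at hj
      obtain ⟨ℓ, h1, h2⟩ := exists_line_through Pl (p i)
      refine ⟨ℓ, h1, fun k hk => ?_⟩
      rw [hj k hk]; exact h2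

lemma isLSF_of_realization {m : ℕ} {p : Fin m → Pl.Point} (hp : Function.Injective p)
    {g : Finset (Fin m) → Bool} (hg : ∀ S, g S = true ↔ LC Pl p S) : IsLSF g := by
  refine ⟨fun I J hJI hI => ?_, fun I hI => ?_, fun I J hI hJ hIJ => ?_⟩
  · exact (hg J).2 (LC_mono Pl hJI ((hg I).1 hI))
  · exact (hg I).2 (LC_small Pl p I hI)
  · obtain ⟨i, hi, j, hj, hij⟩ := Finset.one_lt_card.1 hIJ
    simp only [Finset.mem_inter] at hi hj
    obtain ⟨ℓ₁, hl₁, hp₁⟩ := (hg I).1 hI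
    obtain ⟨ℓ₂, hl₂, hp₂⟩ := (hg J).1 hJ
    have hpij : p i ≠ p j := fun h => hij (hp h)
    have heq : ℓ₁ = ℓ₂ := line_eq_of_pair Pl hpij hl₁ hl₂
      (hp₁ i hi.1) (hp₁ j hj.1) (hp₂ i hi.2) (hp₂ j hj.2)
    refine (hg _).2 ⟨ℓ₁, hl₁, fun k hk => ?_⟩
    rcases Finset.mem_union.1 hk with h | h
    · exact hp₁ k h
    · rw [heq]; exact hp₂ k h

/-- Restriction of a subset of `Fin (n+1)` to `Fin n`. -/
noncomputable def restr {n : ℕ} (S : Finset (Fin (n + 1))) : Finset (Fin n) :=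
  Finset.univ.filter (fun i => i.castSucc ∈ S)

lemma mem_restr {n : ℕ} {S : Finset (Fin (n + 1))} {i : Fin n} :
    i ∈ restr S ↔ i.castSucc ∈ S := by simp [restr]

lemma image_restr_subset {n : ℕ} (S : Finset (Fin (n + 1))) :
    (restr S).image Fin.castSucc ⊆ S := by
  intro x hx
  simp only [Finset.mem_image] at hx
  obtain ⟨j, hj, rfl⟩ := hx
  exact mem_restr.1 hj

lemma image_restr {n : ℕ} (S : Finset (Fin (n + 1))) :
    (restr S).image Fin.castSucc = S.erase (Fin.last n) := by
  ext x
  simp only [Finset.mem_image, Finset.mem_erase]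
  constructor
  · rintro ⟨j, hj, rfl⟩
    exact ⟨(Fin.exists_castSucc_eq.1 ⟨j, rfl⟩), mem_restr.1 hj⟩
  · rintro ⟨hx, hxS⟩
    obtain ⟨j, rfl⟩ := Fin.exists_castSucc_eq.2 hx
    exact ⟨j, mem_restr.2 hxS, rfl⟩

lemma card_restr {n : ℕ} (S : Finset (Fin (n + 1))) (h : Fin.last n ∈ S) :
    (restr S).card = S.card - 1 := by
  rw [← Finset.card_erase_of_mem h, ← image_restr S,
    Finset.card_image_of_injective _ (Fin.castSucc_injective n)]

lemma snoc_injective_iff {n : ℕ} {α : Type*} {p : Fin n → α} (hp : Function.Injective p)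
    (x : α) : Function.Injective (Fin.snoc p x : Fin (n + 1) → α) ↔ x ∉ Set.range p := by
  constructor
  · rintro h ⟨i, rfl⟩
    have : (Fin.snoc p (p i) : Fin (n + 1) → α) i.castSucc =
        (Fin.snoc p (p i) : Fin (n + 1) → α) (Fin.last n) := by
      rw [Fin.snoc_castSucc, Fin.snoc_last]
    exact absurd (h this) (Fin.ne_of_lt (Fin.castSucc_lt_last i))
  · intro hx i j hij
    induction i using Fin.lastCases with
    | last =>
      induction j using Fin.lastCases with
      | last => rfl
      | cast j =>
        rw [Fin.snoc_last, Fin.snoc_castSucc] at hij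
        exact absurd ⟨j, hij.symm⟩ hx
    | cast i =>
      induction j using Fin.lastCases with
      | last =>
        rw [Fin.snoc_last, Fin.snoc_castSucc] at hij
        exact absurd ⟨i, hij⟩ hx
      | cast j =>
        rw [Fin.snoc_castSucc, Fin.snoc_castSucc] at hij
        rw [hp hij]

lemma snoc_comp_castSucc_eq {n : ℕ} {α : Type*} (p : Fin (n + 1) → α) :
    Fin.snoc (p ∘ Fin.castSucc) (p (Fin.last n)) = p := by
  funext i
  induction i using Fin.lastCases with
  | last => rw [Fin.snoc_last]
  | cast i => rw [Fin.snoc_castSucc]; rfl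

lemma exists_maximal_superset {m : ℕ} (f : Finset (Fin m) → Bool) (S : Finset (Fin m))
    (hS : f S = true) : ∃ T, S ⊆ T ∧ f T = true ∧ ∀ U, T ⊆ U → f U = true → U = T := by
  have hne : (Finset.univ.filter (fun T : Finset (Fin m) => S ⊆ T ∧ f T = true)).Nonempty :=
    ⟨S, by simp [hS]⟩
  obtain ⟨T, hT, hmax⟩ := Finset.exists_maximal hne
  simp only [Finset.mem_filter, Finset.mem_univ, true_and] at hT
  refine ⟨T, hT.1, hT.2, fun U hTU hU => ?_⟩
  by_contra hne'
  exact hne' (le_antisymm (hmax (by simp [hT.1.trans hTU, hU]) hTU) hTU)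

end WCAux
namespace WCAux

variable {q : ℕ} (Pl : ProjPlane q)



/-- The set of valid extension points given constraint sets `FL`. -/
def ExtSet {n : ℕ} (FL : Finset (Finset (Fin (n + 1)))) (p' : Fin n → Pl.Point) :
    Set Pl.Point :=
  {x | x ∉ Set.range p' ∧ ∀ S ∈ FL, ∃ ℓ ∈ Pl.L, x ∈ ℓ ∧ ∀ i ∈ restr S, p' i ∈ ℓ}

lemma strongCount_eq {m : ℕ} (g : Finset (Fin m) → Bool) :
    strongCount Pl g = (Finset.univ.filter (fun p : Fin m → Pl.Point =>
      Function.Injective p ∧ ∀ S, (g S = true ↔ LC Pl p S))).card := by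
  rw [strongCount, Nat.card_eq_fintype_card]
  exact Fintype.card_subtype _

lemma line_of_restr {n : ℕ} {g : Finset (Fin n) → Bool} {p' : Fin n → Pl.Point}
    (hinj : Function.Injective p') (hg : ∀ S, g S = true ↔ LC Pl p' S)
    {S : Finset (Fin (n + 1))} (h2 : 2 ≤ (restr S).card) (hgr : g (restr S) = true) :
    ∃ ℓ ∈ Pl.L, (∀ i ∈ restr S, p' i ∈ ℓ) ∧
      (∀ ℓ' ∈ Pl.L, (∀ i ∈ restr S, p' i ∈ ℓ') → ℓ' = ℓ) ∧
      (∀ i, p' i ∈ ℓ ↔ g (insert i (restr S)) = true) := by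
  obtain ⟨ℓ, hl, hpl⟩ := (hg _).1 hgr
  obtain ⟨i₁, hi₁, i₂, hi₂, h12⟩ := Finset.one_lt_card.1 h2
  have hp12 : p' i₁ ≠ p' i₂ := fun h => h12 (hinj h)
  have huniq : ∀ ℓ' ∈ Pl.L, (∀ i ∈ restr S, p' i ∈ ℓ') → ℓ' = ℓ := by
    intro ℓ' hl' hpl'
    exact line_eq_of_pair Pl hp12 hl' hl (hpl' i₁ hi₁) (hpl' i₂ hi₂) (hpl i₁ hi₁) (hpl i₂ hi₂)
  refine ⟨ℓ, hl, hpl, huniq, fun i => ⟨fun hi => ?_, fun hi => ?_⟩⟩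
  · refine (hg _).2 ⟨ℓ, hl, fun j hj => ?_⟩
    rcases Finset.mem_insert.1 hj with rfl | hj
    · exact hi
    · exact hpl j hj
  · obtain ⟨ℓ', hl', hpl'⟩ := (hg _).1 hi
    have : ℓ' = ℓ := huniq ℓ' hl' (fun j hj => hpl' j (Finset.mem_insert_of_mem hj))
    rw [← this]
    exact hpl' i (Finset.mem_insert_self _ _)

lemma ext_card_empty {n : ℕ} {p' : Fin n → Pl.Point} (hinj : Function.Injective p') :
    ((ExtSet Pl (∅ : Finset (Finset (Fin (n + 1)))) p').ncard : ℤ) =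
      (q : ℤ) ^ 2 + q + 1 - n := by
  have hset : ExtSet Pl (∅ : Finset (Finset (Fin (n + 1)))) p' =
      Set.univ \ Set.range p' := by
    ext x; simp [ExtSet]
  have h1 : (Set.univ : Set Pl.Point).ncard = q ^ 2 + q + 1 := by
    rw [Set.ncard_univ, Nat.card_eq_fintype_card, card_point]
  have h2 : (Set.range p').ncard = n := by
    rw [← Set.image_univ, Set.ncard_image_of_injective _ hinj, Set.ncard_univ,
      Nat.card_eq_fintype_card, Fintype.card_fin]
  have h3 : n ≤ q ^ 2 + q + 1 := by
    have := Fintype.card_le_of_injective p' hinj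
    rwa [card_point, Fintype.card_fin] at this
  rw [hset, Set.ncard_diff (Set.subset_univ _) (Set.toFinite _), h1, h2,
    Nat.cast_sub h3]
  push_cast; ring

lemma ext_card_single {n : ℕ} {g : Finset (Fin n) → Bool} {p' : Fin n → Pl.Point}
    (hinj : Function.Injective p') (hg : ∀ S, g S = true ↔ LC Pl p' S)
    {S : Finset (Fin (n + 1))} (h2 : 2 ≤ (restr S).card) (hgr : g (restr S) = true) :
    ((ExtSet Pl {S} p').ncard : ℤ) = (q : ℤ) + 1 -
      (Finset.univ.filter (fun i => g (insert i (restr S)) = true)).card := by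
  obtain ⟨ℓ, hl, hpl, huniq, hmem⟩ := line_of_restr Pl hinj hg h2 hgr
  have hset : ExtSet Pl {S} p' = ℓ \ Set.range p' := by
    ext x
    simp only [ExtSet, Set.mem_setOf_eq, Finset.mem_singleton, Set.mem_diff,
      forall_eq]
    constructor
    · rintro ⟨hx, ℓ', hl', hxl', hpl'⟩
      exact ⟨(huniq ℓ' hl' hpl') ▸ hxl', hx⟩
    · rintro ⟨hxl, hx⟩
      exact ⟨hx, ℓ, hl, hxl, hpl⟩
  have hinter : ℓ ∩ Set.range p' =
      p' '' {i | g (insert i (restr S)) = true} := by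
    ext x
    constructor
    · rintro ⟨hxl, i, rfl⟩
      exact ⟨i, (hmem i).1 hxl, rfl⟩
    · rintro ⟨i, hi, rfl⟩
      exact ⟨(hmem i).2 hi, i, rfl⟩
  have hdiff : ℓ \ Set.range p' = ℓ \ (ℓ ∩ Set.range p') := by
    ext x; simp only [Set.mem_diff, Set.mem_inter_iff]; tauto
  have hm : (ℓ ∩ Set.range p').ncard =
      (Finset.univ.filter (fun i => g (insert i (restr S)) = true)).card := by
    rw [hinter, Set.ncard_image_of_injective _ hinj, Set.ncard_eq_toFinset_card',
      Set.toFinset_setOf]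
  have hmle : (ℓ ∩ Set.range p').ncard ≤ q + 1 := by
    rw [← Pl.line_card ℓ hl]
    exact Set.ncard_le_ncard Set.inter_subset_left (Set.toFinite _)
  rw [hset, hdiff, Set.ncard_diff Set.inter_subset_left (Set.toFinite _),
    Pl.line_card ℓ hl, Nat.cast_sub (by omega), hm]
  push_cast; ring

lemma ext_pair_of_join {n : ℕ} {g : Finset (Fin n) → Bool} {p' : Fin n → Pl.Point}
    (hinj : Function.Injective p') (hg : ∀ S, g S = true ↔ LC Pl p' S)
    {S₁ S₂ : Finset (Fin (n + 1))}
    (h2₁ : 2 ≤ (restr S₁).card)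
    (hg₁ : g (restr S₁) = true)
    (hjoin : g (restr S₁ ∪ restr S₂) = true) :
    ExtSet Pl {S₁, S₂} p' = ExtSet Pl {S₁} p' := by
  obtain ⟨ℓ, hl, hpl, huniq, hmem⟩ := line_of_restr Pl hinj hg h2₁ hg₁
  obtain ⟨ℓj, hlj, hplj⟩ := (hg _).1 hjoin
  have hℓj : ℓj = ℓ := huniq ℓj hlj
    (fun i hi => hplj i (Finset.mem_union_left _ hi))
  ext x
  simp only [ExtSet, Set.mem_setOf_eq, Finset.mem_insert, Finset.mem_singleton,
    forall_eq_or_imp, forall_eq]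
  constructor
  · rintro ⟨hx, h1, -⟩
    exact ⟨hx, h1⟩
  · rintro ⟨hx, h1⟩
    refine ⟨hx, h1, ?_⟩
    obtain ⟨ℓ', hl', hxl', hpl'⟩ := h1
    have : ℓ' = ℓ := huniq ℓ' hl' hpl'
    subst this
    exact ⟨ℓj, hlj, hℓj ▸ hxl', fun i hi => hplj i (Finset.mem_union_right _ hi)⟩

lemma ext_card_pair {n : ℕ} {g : Finset (Fin n) → Bool} {p' : Fin n → Pl.Point}
    (hinj : Function.Injective p') (hg : ∀ S, g S = true ↔ LC Pl p' S)
    {S₁ S₂ : Finset (Fin (n + 1))}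
    (h2₁ : 2 ≤ (restr S₁).card) (h2₂ : 2 ≤ (restr S₂).card)
    (hg₁ : g (restr S₁) = true) (hg₂ : g (restr S₂) = true)
    (hjoin : g (restr S₁ ∪ restr S₂) = false) :
    ((ExtSet Pl {S₁, S₂} p').ncard : ℤ) =
      if ∃ i, g (insert i (restr S₁)) = true ∧ g (insert i (restr S₂)) = true
      then 0 else 1 := by
  obtain ⟨ℓ₁, hl₁, hpl₁, huniq₁, hmem₁⟩ := line_of_restr Pl hinj hg h2₁ hg₁
  obtain ⟨ℓ₂, hl₂, hpl₂, huniq₂, hmem₂⟩ := line_of_restr Pl hinj hg h2₂ hg₂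
  have hne : ℓ₁ ≠ ℓ₂ := by
    intro h
    have : g (restr S₁ ∪ restr S₂) = true := by
      refine (hg _).2 ⟨ℓ₁, hl₁, fun i hi => ?_⟩
      rcases Finset.mem_union.1 hi with hi | hi
      · exact hpl₁ i hi
      · rw [h]; exact hpl₂ i hi
    rw [hjoin] at this; exact Bool.false_ne_true this
  obtain ⟨z, ⟨hz₁, hz₂⟩, hzu⟩ := Pl.unique_point ℓ₁ ℓ₂ hl₁ hl₂ hne
  have hset : ExtSet Pl {S₁, S₂} p' = {z} \ Set.range p' := by
    ext x
    simp only [ExtSet, Set.mem_setOf_eq, Finset.mem_insert, Finset.mem_singleton,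
      forall_eq_or_imp, forall_eq, Set.mem_diff, Set.mem_singleton_iff]
    constructor
    · rintro ⟨hx, ⟨ℓ', hl', hxl', hpl'⟩, ⟨ℓ'', hl'', hxl'', hpl''⟩⟩
      have e1 : ℓ' = ℓ₁ := huniq₁ ℓ' hl' hpl'
      have e2 : ℓ'' = ℓ₂ := huniq₂ ℓ'' hl'' hpl''
      subst e1; subst e2
      exact ⟨hzu x ⟨hxl', hxl''⟩, hx⟩
    · rintro ⟨rfl, hx⟩
      exact ⟨hx, ⟨ℓ₁, hl₁, hz₁, hpl₁⟩, ⟨ℓ₂, hl₂, hz₂, hpl₂⟩⟩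
  have hzr : z ∈ Set.range p' ↔
      ∃ i, g (insert i (restr S₁)) = true ∧ g (insert i (restr S₂)) = true := by
    constructor
    · rintro ⟨i, rfl⟩
      exact ⟨i, (hmem₁ i).1 hz₁, (hmem₂ i).1 hz₂⟩
    · rintro ⟨i, hi₁, hi₂⟩
      have : p' i = z := hzu (p' i) ⟨(hmem₁ i).2 hi₁, (hmem₂ i).2 hi₂⟩
      exact ⟨i, this⟩
  by_cases hcase : ∃ i, g (insert i (restr S₁)) = true ∧ g (insert i (restr S₂)) = true
  · rw [if_pos hcase, hset]
    have : ({z} : Set Pl.Point) \ Set.range p' = ∅ := by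
      ext x
      simp only [Set.mem_diff, Set.mem_singleton_iff, Set.mem_empty_iff_false, iff_false,
        not_and]
      rintro rfl
      simpa using hzr.2 hcase
    rw [this, Set.ncard_empty]; norm_num
  · rw [if_neg hcase, hset]
    have : ({z} : Set Pl.Point) \ Set.range p' = {z} := by
      ext x
      simp only [Set.mem_diff, Set.mem_singleton_iff, and_iff_left_iff_imp]
      rintro rfl
      exact fun h => hcase (hzr.1 h)
    rw [this, Set.ncard_singleton]; norm_num

end WCAux
namespace WCAux

variable {q : ℕ} (Pl : ProjPlane q)



lemma fiber_eq {m : ℕ} (h : Finset (Fin m) → Bool) (g : Finset (Fin m) → Bool)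
    (hg : ∀ S, h S = true → g S = true) :
    (Finset.univ.filter (fun p : Fin m → Pl.Point =>
        Function.Injective p ∧ ∀ S, h S = true → LC Pl p S)).filter
      (fun p => (fun S => decide (LC Pl p S)) = g) =
    Finset.univ.filter (fun p : Fin m → Pl.Point =>
      Function.Injective p ∧ ∀ S, (g S = true ↔ LC Pl p S)) := by
  ext p
  simp only [Finset.mem_filter, Finset.mem_univ, true_and]
  constructor
  · rintro ⟨⟨hinj, hweak⟩, htp⟩
    refine ⟨hinj, fun S => ?_⟩
    rw [← htp]
    simp
  · rintro ⟨hinj, hiff⟩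
    refine ⟨⟨hinj, fun S hS => (hiff S).1 (hg S hS)⟩, ?_⟩
    funext S
    by_cases hc : LC Pl p S
    · simp [hc, (hiff S).2 hc]
    · have hgs : g S = false := Bool.eq_false_iff.2 (fun ht => hc ((hiff S).1 ht))
      simp [hc, hgs]

lemma weak_decomp {n : ℕ} (f : Finset (Fin (n + 1)) → Bool)
    (f' : Finset (Fin n) → Bool)
    (hf' : ∀ S : Finset (Fin n), f' S = true ↔
      ∃ T : Finset (Fin (n + 1)), f T = true ∧ S.image Fin.castSucc ⊆ T) :
    weakCount Pl f =
      ∑ g ∈ Finset.univ.filter (fun g : Finset (Fin n) → Bool =>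
          IsLSF g ∧ ∀ S, f' S = true → g S = true),
        ∑ p' ∈ Finset.univ.filter (fun p' : Fin n → Pl.Point =>
            Function.Injective p' ∧ ∀ S, (g S = true ↔ LC Pl p' S)),
          (ExtSet Pl (Finset.univ.filter
            (fun S : Finset (Fin (n + 1)) => IsFullLine f S ∧ Fin.last n ∈ S)) p').ncard := by
  classical
  set FL : Finset (Finset (Fin (n + 1))) :=
    Finset.univ.filter (fun S => IsFullLine f S ∧ Fin.last n ∈ S) with hFL
  set W : Finset (Fin (n + 1) → Pl.Point) :=
    Finset.univ.filter (fun p => Function.Injective p ∧ ∀ S, f S = true → LC Pl p S) with hW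
  set W' : Finset (Fin n → Pl.Point) :=
    Finset.univ.filter (fun p' => Function.Injective p' ∧ ∀ S, f' S = true → LC Pl p' S)
    with hW'
  have hWmem : ∀ p, p ∈ W ↔ Function.Injective p ∧ ∀ S, f S = true → LC Pl p S := by
    intro p; simp [hW]
  have hW'mem : ∀ p', p' ∈ W' ↔
      Function.Injective p' ∧ ∀ S, f' S = true → LC Pl p' S := by
    intro p'; simp [hW']
  have hFLmem : ∀ S, S ∈ FL ↔ IsFullLine f S ∧ Fin.last n ∈ S := by
    intro S; simp [hFL]
  -- Step 1 : weakCount = W.card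
  have step1 : weakCount Pl f = W.card := by
    rw [weakCount]
    have hmapsto : ∀ p ∈ W, (fun S => decide (LC Pl p S)) ∈
        Finset.univ.filter (fun g : Finset (Fin (n + 1)) → Bool =>
          ∀ S, f S = true → g S = true) := by
      intro p hp
      obtain ⟨-, hweak⟩ := (hWmem p).1 hp
      simp only [Finset.mem_filter, Finset.mem_univ, true_and]
      intro S hS
      exact decide_eq_true (hweak S hS)
    rw [Finset.card_eq_sum_card_fiberwise hmapsto]
    apply Finset.sum_congr rfl
    intro g hg
    simp only [Finset.mem_filter, Finset.mem_univ, true_and] at hg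
    rw [strongCount_eq, ← fiber_eq Pl f g hg]
  -- Step 2 : fiber over first-n-coordinates
  have hmapsto2 : ∀ p ∈ W, p ∘ Fin.castSucc ∈ W' := by
    intro p hp
    obtain ⟨hinj, hweak⟩ := (hWmem p).1 hp
    refine (hW'mem _).2 ⟨hinj.comp (Fin.castSucc_injective n), fun S hS => ?_⟩
    obtain ⟨T, hfT, hsub⟩ := (hf' S).1 hS
    obtain ⟨ℓ, hl, hpl⟩ := hweak T hfT
    exact ⟨ℓ, hl, fun i hi => hpl _ (hsub (Finset.mem_image_of_mem _ hi))⟩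
  have step2 : W.card = ∑ p' ∈ W',
      (W.filter (fun p => p ∘ Fin.castSucc = p')).card :=
    Finset.card_eq_sum_card_fiberwise hmapsto2
  -- Step 3 : each fiber is in bijection with the extension set
  have step3 : ∀ p' ∈ W', (W.filter (fun p => p ∘ Fin.castSucc = p')).card =
      (ExtSet Pl FL p').ncard := by
    intro p' hp'
    obtain ⟨hinj', hweak'⟩ := (hW'mem p').1 hp'
    rw [Set.ncard_eq_toFinset_card']
    refine Finset.card_bij' (fun p _ => p (Fin.last n)) (fun x _ => Fin.snoc p' x)
      ?hi ?hj ?left ?right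
    case hi =>
      intro p hp
      simp only [Finset.mem_filter] at hp
      obtain ⟨hpW, hcomp⟩ := hp
      obtain ⟨hinj, hweak⟩ := (hWmem p).1 hpW
      rw [Set.mem_toFinset]
      show p (Fin.last n) ∉ Set.range p' ∧ ∀ S ∈ FL, ∃ ℓ ∈ Pl.L,
        p (Fin.last n) ∈ ℓ ∧ ∀ i ∈ restr S, p' i ∈ ℓ
      refine ⟨?_, ?_⟩
      · rintro ⟨i, hi⟩
        have hi' : p (Fin.castSucc i) = p (Fin.last n) :=
          (congrFun hcomp i).trans hi
        exact (Fin.ne_of_lt (Fin.castSucc_lt_last i)) (hinj hi')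
      · intro S hS
        obtain ⟨hfull, hlast⟩ := (hFLmem S).1 hS
        obtain ⟨ℓ, hl, hpl⟩ := hweak S hfull.2.1
        refine ⟨ℓ, hl, hpl _ hlast, fun i hi => ?_⟩
        have : (p ∘ Fin.castSucc) i = p' i := congrFun hcomp i
        rw [← this]
        exact hpl _ (mem_restr.1 hi)
    case hj =>
      intro x hx
      rw [Set.mem_toFinset] at hx
      show Fin.snoc p' x ∈ Finset.filter (fun p => p ∘ Fin.castSucc = p') W
      obtain ⟨hxr, hxcond⟩ := hx
      have hcomp : (Fin.snoc p' x : Fin (n + 1) → Pl.Point) ∘ Fin.castSucc = p' := by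
        funext i
        simp [Function.comp]
      simp only [Finset.mem_filter]
      refine ⟨(hWmem _).2 ⟨(snoc_injective_iff hinj' x).2 hxr, ?_⟩, hcomp⟩
      intro S hS
      by_cases hlast : Fin.last n ∈ S
      · by_cases h3 : 3 ≤ S.card
        · obtain ⟨T, hST, hfT, hmaxT⟩ := exists_maximal_superset f S hS
          have hTfull : IsFullLine f T :=
            ⟨le_trans h3 (Finset.card_le_card hST), hfT, hmaxT⟩
          have hTFL : T ∈ FL := (hFLmem T).2 ⟨hTfull, hST hlast⟩
          obtain ⟨ℓ, hl, hxl, hpl⟩ := hxcond T hTFL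
          refine ⟨ℓ, hl, fun i hi => ?_⟩
          have hiT := hST hi
          rcases eq_or_ne i (Fin.last n) with rfl | hne
          · rw [Fin.snoc_last]; exact hxl
          · obtain ⟨j, rfl⟩ := Fin.exists_castSucc_eq.2 hne
            rw [Fin.snoc_castSucc]
            exact hpl j (mem_restr.2 hiT)
        · exact LC_small Pl _ S (by omega)
      · have hf'S : f' (restr S) = true :=
          (hf' _).2 ⟨S, hS, image_restr_subset S⟩
        obtain ⟨ℓ, hl, hpl⟩ := hweak' (restr S) hf'S
        refine ⟨ℓ, hl, fun i hi => ?_⟩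
        have hine : i ≠ Fin.last n := fun h => hlast (h ▸ hi)
        obtain ⟨j, rfl⟩ := Fin.exists_castSucc_eq.2 hine
        rw [Fin.snoc_castSucc]
        exact hpl j (mem_restr.2 hi)
    case left =>
      intro p hp
      simp only [Finset.mem_filter] at hp
      show Fin.snoc p' (p (Fin.last n)) = p
      rw [← hp.2]
      exact snoc_comp_castSucc_eq p
    case right =>
      intro x hx
      simp
  -- Step 4 : regroup by strong type over `W'`
  have hmapsto3 : ∀ p' ∈ W', (fun S => decide (LC Pl p' S)) ∈
      Finset.univ.filter (fun g : Finset (Fin n) → Bool =>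
        ∀ S, f' S = true → g S = true) := by
    intro p' hp'
    obtain ⟨-, hweak'⟩ := (hW'mem p').1 hp'
    simp only [Finset.mem_filter, Finset.mem_univ, true_and]
    intro S hS
    exact decide_eq_true (hweak' S hS)
  have step4 : ∑ p' ∈ W', (ExtSet Pl FL p').ncard =
      ∑ g ∈ Finset.univ.filter (fun g : Finset (Fin n) → Bool =>
          ∀ S, f' S = true → g S = true),
        ∑ p' ∈ Finset.univ.filter (fun p' : Fin n → Pl.Point =>
            Function.Injective p' ∧ ∀ S, (g S = true ↔ LC Pl p' S)),
          (ExtSet Pl FL p').ncard := by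
    rw [← Finset.sum_fiberwise_of_maps_to hmapsto3 (fun p' => (ExtSet Pl FL p').ncard)]
    apply Finset.sum_congr rfl
    intro g hg
    simp only [Finset.mem_filter, Finset.mem_univ, true_and] at hg
    rw [← fiber_eq Pl f' g hg]
  -- Step 5 : restrict to linear space functions
  have step5 : ∑ g ∈ Finset.univ.filter (fun g : Finset (Fin n) → Bool =>
          ∀ S, f' S = true → g S = true),
        ∑ p' ∈ Finset.univ.filter (fun p' : Fin n → Pl.Point =>
            Function.Injective p' ∧ ∀ S, (g S = true ↔ LC Pl p' S)),
          (ExtSet Pl FL p').ncard =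
      ∑ g ∈ Finset.univ.filter (fun g : Finset (Fin n) → Bool =>
          IsLSF g ∧ ∀ S, f' S = true → g S = true),
        ∑ p' ∈ Finset.univ.filter (fun p' : Fin n → Pl.Point =>
            Function.Injective p' ∧ ∀ S, (g S = true ↔ LC Pl p' S)),
          (ExtSet Pl FL p').ncard := by
    symm
    apply Finset.sum_subset
    · intro g hg
      simp only [Finset.mem_filter, Finset.mem_univ, true_and] at hg ⊢
      exact hg.2
    · intro g hg hg'
      simp only [Finset.mem_filter, Finset.mem_univ, true_and] at hg hg'
      have hempty : Finset.univ.filter (fun p' : Fin n → Pl.Point =>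
          Function.Injective p' ∧ ∀ S, (g S = true ↔ LC Pl p' S)) = ∅ := by
        rw [Finset.filter_eq_empty_iff]
        rintro p' - ⟨hinj, hiff⟩
        exact hg' ⟨isLSF_of_realization Pl hinj hiff, hg⟩
      rw [hempty, Finset.sum_empty]
  rw [step1, step2, Finset.sum_congr rfl step3, step4, step5]

end WCAux

open WCAux

set_option maxHeartbeats 1000000 in
/-- If a linear space function `f` on `n + 1` points has a point (labelled as
the last point) of index at most 2, and `f'` is the induced linear space
function on the remaining `n` points, then there are integer polynomials
`μ_g`, indexed by the linear space functions `g ≥ f'` on `n` points, such that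
`B_f(Π) = Σ_{g ≥ f'} μ_g(q)·A_g(Π)` for every finite projective plane `Π` of
order `q`; in particular `B_f(Π)` is polynomial in `q` and linear in the
`A_g(Π)`. -/
theorem weakCount_formula (n : ℕ) (f : Finset (Fin (n + 1)) → Bool)
    (hf : IsLSF f) (hidx : pointIndex f (Fin.last n) ≤ 2)
    (f' : Finset (Fin n) → Bool)
    (hf' : ∀ S : Finset (Fin n), f' S = true ↔
      ∃ T : Finset (Fin (n + 1)), f T = true ∧ S.image Fin.castSucc ⊆ T) :
    ∃ μ : (Finset (Fin n) → Bool) → Polynomial ℤ,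
      ∀ (q : ℕ) (Pl : ProjPlane q),
        (weakCount Pl f : ℤ) =
          ∑ g ∈ Finset.univ.filter
              (fun g : Finset (Fin n) → Bool =>
                IsLSF g ∧ ∀ S, f' S = true → g S = true),
            (μ g).eval (q : ℤ) * (strongCount Pl g : ℤ) := by
  classical
  set FL : Finset (Finset (Fin (n + 1))) :=
    Finset.univ.filter (fun S => IsFullLine f S ∧ Fin.last n ∈ S) with hFL
  have hidx' : FL.card ≤ 2 := by
    have hpi : pointIndex f (Fin.last n) = FL.card := by
      rw [pointIndex, Nat.card_eq_fintype_card, hFL]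
      exact Fintype.card_subtype _
    omega
  have hSfacts : ∀ S ∈ FL, 2 ≤ (restr S).card ∧ f S = true ∧ Fin.last n ∈ S := by
    intro S hS
    simp only [hFL, Finset.mem_filter, Finset.mem_univ, true_and] at hS
    obtain ⟨⟨h3, hfS, -⟩, hlast⟩ := hS
    refine ⟨?_, hfS, hlast⟩
    rw [card_restr S hlast]; omega
  rcases (by omega : FL.card = 0 ∨ FL.card = 1 ∨ FL.card = 2) with h0 | h1 | h2
  · -- no full line through the last point
    have hFLe : FL = ∅ := Finset.card_eq_zero.1 h0
    refine ⟨fun _ => Polynomial.X ^ 2 + Polynomial.X + Polynomial.C (1 - (n : ℤ)), ?_⟩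
    intro q Pl
    have hdec := weak_decomp Pl f f' hf'
    rw [← hFL, hFLe] at hdec
    calc (weakCount Pl f : ℤ)
        = ∑ g ∈ Finset.univ.filter (fun g : Finset (Fin n) → Bool =>
              IsLSF g ∧ ∀ S, f' S = true → g S = true),
            ∑ p' ∈ Finset.univ.filter (fun p' : Fin n → Pl.Point =>
                Function.Injective p' ∧ ∀ S, (g S = true ↔ LC Pl p' S)),
              ((ExtSet Pl (∅ : Finset (Finset (Fin (n + 1)))) p').ncard : ℤ) := by
          rw [hdec]; push_cast; rfl
      _ = _ := by
          apply Finset.sum_congr rfl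
          intro g hg
          have hterm : ∀ p' ∈ Finset.univ.filter (fun p' : Fin n → Pl.Point =>
              Function.Injective p' ∧ ∀ S, (g S = true ↔ LC Pl p' S)),
              ((ExtSet Pl (∅ : Finset (Finset (Fin (n + 1)))) p').ncard : ℤ) =
                ((Polynomial.X ^ 2 + Polynomial.X + Polynomial.C (1 - (n : ℤ))).eval
                  (q : ℤ)) := by
            intro p' hp'
            simp only [Finset.mem_filter, Finset.mem_univ, true_and] at hp'
            rw [ext_card_empty Pl hp'.1]
            simp
            ring
          rw [Finset.sum_congr rfl hterm, Finset.sum_const, nsmul_eq_mul,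
            ← strongCount_eq Pl g, mul_comm]
  · -- one full line through the last point
    obtain ⟨S₁, hS₁⟩ := Finset.card_eq_one.1 h1
    have hS₁FL : S₁ ∈ FL := hS₁ ▸ Finset.mem_singleton_self S₁
    obtain ⟨h2₁, hfS₁, hlast₁⟩ := hSfacts S₁ hS₁FL
    refine ⟨fun g => Polynomial.X + Polynomial.C (1 -
      ((Finset.univ.filter (fun i => g (insert i (restr S₁)) = true)).card : ℤ)), ?_⟩
    intro q Pl
    have hdec := weak_decomp Pl f f' hf'
    rw [← hFL, hS₁] at hdec
    calc (weakCount Pl f : ℤ)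
        = ∑ g ∈ Finset.univ.filter (fun g : Finset (Fin n) → Bool =>
              IsLSF g ∧ ∀ S, f' S = true → g S = true),
            ∑ p' ∈ Finset.univ.filter (fun p' : Fin n → Pl.Point =>
                Function.Injective p' ∧ ∀ S, (g S = true ↔ LC Pl p' S)),
              ((ExtSet Pl ({S₁} : Finset (Finset (Fin (n + 1)))) p').ncard : ℤ) := by
          rw [hdec]; push_cast; rfl
      _ = _ := by
          apply Finset.sum_congr rfl
          intro g hg
          simp only [Finset.mem_filter, Finset.mem_univ, true_and] at hg
          have hgr₁ : g (restr S₁) = true :=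
            hg.2 _ ((hf' _).2 ⟨S₁, hfS₁, image_restr_subset S₁⟩)
          have hterm : ∀ p' ∈ Finset.univ.filter (fun p' : Fin n → Pl.Point =>
              Function.Injective p' ∧ ∀ S, (g S = true ↔ LC Pl p' S)),
              ((ExtSet Pl ({S₁} : Finset (Finset (Fin (n + 1)))) p').ncard : ℤ) =
                ((Polynomial.X + Polynomial.C (1 -
                  ((Finset.univ.filter
                    (fun i => g (insert i (restr S₁)) = true)).card : ℤ))).eval
                  (q : ℤ)) := by
            intro p' hp'
            simp only [Finset.mem_filter, Finset.mem_univ, true_and] at hp'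
            rw [ext_card_single Pl hp'.1 hp'.2 h2₁ hgr₁]
            simp
            ring
          rw [Finset.sum_congr rfl hterm, Finset.sum_const, nsmul_eq_mul,
            ← strongCount_eq Pl g, mul_comm]
  · -- two full lines through the last point
    obtain ⟨S₁, S₂, hS12, hpair⟩ := Finset.card_eq_two.1 h2
    have hS₁FL : S₁ ∈ FL := by rw [hpair]; exact Finset.mem_insert_self _ _
    have hS₂FL : S₂ ∈ FL := by
      rw [hpair]; exact Finset.mem_insert_of_mem (Finset.mem_singleton_self _)
    obtain ⟨h2₁, hfS₁, hlast₁⟩ := hSfacts S₁ hS₁FL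
    obtain ⟨h2₂, hfS₂, hlast₂⟩ := hSfacts S₂ hS₂FL
    refine ⟨fun g =>
      if g (restr S₁ ∪ restr S₂) = true then
        Polynomial.X + Polynomial.C (1 -
          ((Finset.univ.filter (fun i => g (insert i (restr S₁)) = true)).card : ℤ))
      else
        Polynomial.C (if ∃ i, g (insert i (restr S₁)) = true ∧
          g (insert i (restr S₂)) = true then 0 else 1), ?_⟩
    intro q Pl
    have hdec := weak_decomp Pl f f' hf'
    rw [← hFL, hpair] at hdec
    calc (weakCount Pl f : ℤ)
        = ∑ g ∈ Finset.univ.filter (fun g : Finset (Fin n) → Bool =>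
              IsLSF g ∧ ∀ S, f' S = true → g S = true),
            ∑ p' ∈ Finset.univ.filter (fun p' : Fin n → Pl.Point =>
                Function.Injective p' ∧ ∀ S, (g S = true ↔ LC Pl p' S)),
              ((ExtSet Pl ({S₁, S₂} : Finset (Finset (Fin (n + 1)))) p').ncard : ℤ) := by
          rw [hdec]; push_cast; rfl
      _ = _ := by
          apply Finset.sum_congr rfl
          intro g hg
          simp only [Finset.mem_filter, Finset.mem_univ, true_and] at hg
          have hgr₁ : g (restr S₁) = true :=
            hg.2 _ ((hf' _).2 ⟨S₁, hfS₁, image_restr_subset S₁⟩)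
          have hgr₂ : g (restr S₂) = true :=
            hg.2 _ ((hf' _).2 ⟨S₂, hfS₂, image_restr_subset S₂⟩)
          have hterm : ∀ p' ∈ Finset.univ.filter (fun p' : Fin n → Pl.Point =>
              Function.Injective p' ∧ ∀ S, (g S = true ↔ LC Pl p' S)),
              ((ExtSet Pl ({S₁, S₂} : Finset (Finset (Fin (n + 1)))) p').ncard : ℤ) =
                ((if g (restr S₁ ∪ restr S₂) = true then
                    Polynomial.X + Polynomial.C (1 -
                      ((Finset.univ.filter
                        (fun i => g (insert i (restr S₁)) = true)).card : ℤ))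
                  else
                    Polynomial.C (if ∃ i, g (insert i (restr S₁)) = true ∧
                      g (insert i (restr S₂)) = true then 0 else 1)).eval (q : ℤ)) := by
            intro p' hp'
            simp only [Finset.mem_filter, Finset.mem_univ, true_and] at hp'
            by_cases hjoin : g (restr S₁ ∪ restr S₂) = true
            · rw [ext_pair_of_join Pl hp'.1 hp'.2 h2₁ hgr₁ hjoin,
                ext_card_single Pl hp'.1 hp'.2 h2₁ hgr₁, if_pos hjoin]
              simp
              ring
            · have hjf : g (restr S₁ ∪ restr S₂) = false := Bool.eq_false_iff.2 hjoin
              rw [ext_card_pair Pl hp'.1 hp'.2 h2₁ h2₂ hgr₁ hgr₂ hjf, if_neg hjoin]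
              split_ifs <;> simp
          rw [Finset.sum_congr rfl hterm, Finset.sum_const, nsmul_eq_mul,
            ← strongCount_eq Pl g, mul_comm]
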